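/- For any composition α and n ≥ ℓ(α), the polynomial Ṁ_α(y_1,...,y_n) := ∑_{σ ∈ P_α} μ_{P_α}(σ) y^σ is quasisymmetric in y_1,...,y_n. -/

import Mathlib

open MvPolynomial Finset
open scoped Classical

/-- The positive part of a weak composition: delete the zero entries. -/
def posList (l : List ℕ) : List ℕ := l.filter (fun x => x ≠ 0)

/-- `S_α`: length-`n` tuples of nonnegative integers whose positive part is `α`. -/
def Sset (α : List ℕ) (n : ℕ) : Set (Fin n → ℕ) :=
  {b | posList (List.ofFn b) = α}

/-- `P_α`: componentwise maxima of nonempty collections of elements of `S_α`. -/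
def Pset (α : List ℕ) (n : ℕ) : Set (Fin n → ℕ) :=
  {σ | ∃ T : Finset (Fin n → ℕ), T.Nonempty ∧ (↑T : Set (Fin n → ℕ)) ⊆ Sset α n ∧ σ = T.sup id}

/-- The local moves (M.1): `0p ↦ p0` and (M.2'): `0p ↦ pp` for `p > 0`. -/
inductive GlideMove : List ℕ → List ℕ → Prop
  | m1 (u v : List ℕ) (p : ℕ) (hp : 0 < p) :
      GlideMove (u ++ 0 :: p :: v) (u ++ p :: 0 :: v)
  | m2 (u v : List ℕ) (p : ℕ) (hp : 0 < p) :
      GlideMove (u ++ 0 :: p :: v) (u ++ p :: p :: v)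

/-- `C_α`: strings obtainable from elements of `S_α` by iterated local moves. -/
def Cset (α : List ℕ) (n : ℕ) : Set (Fin n → ℕ) :=
  {σ | ∃ b ∈ Sset α n, Relation.ReflTransGen GlideMove (List.ofFn b) (List.ofFn σ)}

/-- The exponent vector placing `β_t` in position `j_t`. -/
noncomputable def expVec {n k : ℕ} (j : Fin k → Fin n) (β : Fin k → ℕ) : Fin n →₀ ℕ :=
  Finsupp.equivFunOnFinite.symm (fun i => ∑ t : Fin k, if j t = i then β t else 0)

/-- A polynomial is quasisymmetric if, for every composition `β` and any two strictly
increasing index sequences, the corresponding monomials have equal coefficients. -/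
def IsQuasisymmetric {n : ℕ} {R : Type*} [CommSemiring R] (f : MvPolynomial (Fin n) R) : Prop :=
  ∀ (k : ℕ) (β : Fin k → ℕ), (∀ t, 0 < β t) →
    ∀ j j' : Fin k → Fin n, StrictMono j → StrictMono j' →
      f.coeff (expVec j β) = f.coeff (expVec j' β)

noncomputable def extVec {m n : ℕ} (g : Fin m → Fin n) (w : Fin m → ℕ) : Fin n → ℕ :=
  fun i => ∑ s : Fin m, if g s = i then w s else 0

lemma extVec_apply {m n : ℕ} {g : Fin m → Fin n} (hg : Function.Injective g)
    (w : Fin m → ℕ) (s : Fin m) : extVec g w (g s) = w s := by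
  unfold extVec
  simp [hg.eq_iff]

lemma extVec_ne {m n : ℕ} {g : Fin m → Fin n} {w : Fin m → ℕ} {i : Fin n}
    (h : ∀ s, g s ≠ i) : extVec g w i = 0 := by
  unfold extVec
  simp only [Finset.sum_eq_zero_iff, Finset.mem_univ, forall_true_left]
  intro s
  simp [h s]

lemma extVec_support {m n : ℕ} {g : Fin m → Fin n} {w : Fin m → ℕ} {i : Fin n}
    (h : extVec g w i ≠ 0) : ∃ s, g s = i := by
  by_contra hc
  push_neg at hc
  exact h (extVec_ne hc)

lemma posList_ofFn_comp {m n : ℕ} (g : Fin m → Fin n) (hg : StrictMono g)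
    (f : Fin n → ℕ) (hf : ∀ i, f i ≠ 0 → ∃ s, g s = i) :
    posList (List.ofFn f) = posList (List.ofFn (f ∘ g)) := by
  unfold posList
  rw [List.ofFn_eq_map (f := f), ← List.map_ofFn (f := g) (g := f)]
  rw [List.filter_map, List.filter_map]
  congr 1
  have hs1 : ((List.finRange n).filter ((fun x => decide (x ≠ 0)) ∘ f)).Pairwise (· < ·) :=
    List.Pairwise.filter _ (List.pairwise_lt_finRange n)
  have hs2 : ((List.ofFn g).filter ((fun x => decide (x ≠ 0)) ∘ f)).Pairwise (· < ·) :=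
    List.Pairwise.filter _ (List.pairwise_ofFn.2 (fun _ _ h => hg h))
  have : IsAntisymm (Fin n) (· < ·) := ⟨fun a b h h' => absurd h' (lt_asymm h)⟩
  refine List.Perm.eq_of_pairwise' hs1 hs2 ?_
  rw [List.perm_ext_iff_of_nodup hs1.nodup hs2.nodup]
  intro i
  simp only [List.mem_filter, Function.comp, List.mem_finRange, true_and, List.mem_ofFn,
    decide_eq_true_eq]
  constructor
  · intro h
    obtain ⟨s, hs⟩ := hf i h
    exact ⟨⟨s, hs⟩, h⟩
  · tauto

lemma posList_extVec {m n : ℕ} {g : Fin m → Fin n} (hg : StrictMono g) (w : Fin m → ℕ) :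
    posList (List.ofFn (extVec g w)) = posList (List.ofFn w) := by
  rw [posList_ofFn_comp g hg _ (fun i hi => extVec_support hi)]
  have he : extVec g w ∘ g = w := funext fun s => extVec_apply hg.injective w s
  rw [he]

lemma exists_match {n : ℕ} {σ τ : Fin n → ℕ}
    (h : posList (List.ofFn σ) = posList (List.ofFn τ)) :
    ∃ (m : ℕ) (g g' : Fin m → Fin n), StrictMono g ∧ StrictMono g' ∧
      (∀ i, σ i ≠ 0 → ∃ s, g s = i) ∧ (∀ i, τ i ≠ 0 → ∃ s, g' s = i) ∧
      (∀ s, σ (g s) = τ (g' s)) := by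
  have hmap : ∀ f : Fin n → ℕ, posList (List.ofFn f)
      = ((List.finRange n).filter (fun i => decide (f i ≠ 0))).map f := by
    intro f
    unfold posList
    rw [List.ofFn_eq_map (f := f), List.filter_map]
    rfl
  set lσ := (List.finRange n).filter (fun i => decide (σ i ≠ 0)) with hlσ
  set lτ := (List.finRange n).filter (fun i => decide (τ i ≠ 0)) with hlτ
  have hmm : lσ.map σ = lτ.map τ := by rw [← hmap, ← hmap]; exact h
  have hlen : lσ.length = lτ.length := by
    have := congrArg List.length hmm
    simpa using this
  have hsσ : lσ.Pairwise (· < ·) := List.Pairwise.filter _ (List.pairwise_lt_finRange n)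
  have hsτ : lτ.Pairwise (· < ·) := List.Pairwise.filter _ (List.pairwise_lt_finRange n)
  refine ⟨lσ.length, lσ.get, fun s => lτ.get (Fin.cast hlen s), ?_, ?_, ?_, ?_, ?_⟩
  · exact fun a b hab => hsσ.rel_get_of_lt hab
  · intro a b hab
    apply hsτ.rel_get_of_lt
    rw [Fin.lt_def] at hab ⊢
    simp only [Fin.coe_cast]
    exact hab
  · intro i hi
    have : i ∈ lσ := by
      rw [hlσ, List.mem_filter]
      simp [hi]
    exact List.mem_iff_get.1 this
  · intro i hi
    have : i ∈ lτ := by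
      rw [hlτ, List.mem_filter]
      simp [hi]
    obtain ⟨s, hs⟩ := List.mem_iff_get.1 this
    exact ⟨Fin.cast hlen.symm s, by simpa using hs⟩
  · intro s
    have hb1 : (s : ℕ) < (lσ.map σ).length := by simpa using s.isLt
    have hb2 : (s : ℕ) < (lτ.map τ).length := by simpa [← hlen] using s.isLt
    have key : (lσ.map σ)[(s:ℕ)]'hb1 = (lτ.map τ)[(s:ℕ)]'hb2 := by simp only [hmm]
    simpa [List.getElem_map] using key

lemma psi_facts {m n : ℕ} (g g' : Fin m → Fin n) (hg : StrictMono g) (hg' : StrictMono g')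
    (σ τ : Fin n → ℕ) (hcov : ∀ i, σ i ≠ 0 → ∃ s, g s = i)
    (hcov' : ∀ i, τ i ≠ 0 → ∃ s, g' s = i)
    (hmatch : ∀ s, σ (g s) = τ (g' s)) :
    (extVec g' (fun s => σ (g s)) = τ) ∧
    (∀ q, q ≤ σ → extVec g' (fun s => q (g s)) ≤ τ) ∧
    (∀ q, q ≤ σ → posList (List.ofFn (extVec g' (fun s => q (g s)))) = posList (List.ofFn q)) ∧
    (∀ q, q ≤ σ → extVec g (fun s => extVec g' (fun t => q (g t)) (g' s)) = q) := by
  have hzero : ∀ q : Fin n → ℕ, q ≤ σ → ∀ i, (∀ s, g s ≠ i) → q i = 0 := by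
    intro q hq i hi
    have hσi : σ i = 0 := by
      by_contra hs
      obtain ⟨s, hs'⟩ := hcov i hs
      exact hi s hs'
    have h2 : q i ≤ σ i := hq i
    rw [hσi] at h2
    exact Nat.le_zero.mp h2
  refine ⟨?_, ?_, ?_, ?_⟩
  · funext i
    by_cases h : ∃ s, g' s = i
    · obtain ⟨s, rfl⟩ := h
      rw [extVec_apply hg'.injective]
      exact hmatch s
    · push_neg at h
      rw [extVec_ne h]
      by_contra ht
      obtain ⟨s, hs⟩ := hcov' i (fun hh => ht hh.symm)
      exact h s hs
  · intro q hq i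
    by_cases h : ∃ s, g' s = i
    · obtain ⟨s, rfl⟩ := h
      rw [extVec_apply hg'.injective]
      calc q (g s) ≤ σ (g s) := hq _
        _ = τ (g' s) := hmatch s
    · push_neg at h
      rw [extVec_ne h]
      exact Nat.zero_le _
  · intro q hq
    rw [posList_extVec hg']
    rw [posList_ofFn_comp g hg q (fun i hi => by
      by_contra hc; push_neg at hc; exact hi (hzero q hq i hc))]
    rfl
  · intro q hq
    funext i
    by_cases h : ∃ s, g s = i
    · obtain ⟨s, rfl⟩ := h
      rw [extVec_apply hg.injective, extVec_apply hg'.injective]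
    · push_neg at h
      rw [extVec_ne h, (hzero q hq i h)]

lemma transfer_mem {α : List ℕ} {n : ℕ} {σ τ : Fin n → ℕ}
    (hpl : posList (List.ofFn σ) = posList (List.ofFn τ)) (hσ : σ ∈ Pset α n) :
    τ ∈ Pset α n := by
  obtain ⟨m, g, g', hg, hg', hcov, hcov', hmatch⟩ := exists_match hpl
  obtain ⟨hΨσ, hΨle, hΨpl, hΨinv⟩ := psi_facts g g' hg hg' σ τ hcov hcov' hmatch
  obtain ⟨T, hne, hTS, hsup⟩ := hσ
  set Ψ : (Fin n → ℕ) → (Fin n → ℕ) := fun b => extVec g' (fun s => b (g s)) with hΨ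
  have hble : ∀ b ∈ T, b ≤ σ := by
    intro b hb
    rw [hsup]
    exact Finset.le_sup (f := id) hb
  refine ⟨T.image Ψ, hne.image _, ?_, ?_⟩
  · intro x hx
    simp only [Finset.coe_image, Set.mem_image, Finset.mem_coe] at hx
    obtain ⟨b, hb, rfl⟩ := hx
    show posList (List.ofFn (Ψ b)) = α
    rw [hΨ]
    rw [hΨpl b (hble b hb)]
    exact hTS hb
  · funext i
    rw [Finset.sup_image]
    have : (T.sup (id ∘ Ψ)) i = T.sup fun b => Ψ b i := by
      rw [Finset.sup_apply]
      rfl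
    rw [this]
    by_cases h : ∃ s, g' s = i
    · obtain ⟨s, rfl⟩ := h
      have h1 : ∀ b, Ψ b (g' s) = b (g s) := fun b => extVec_apply hg'.injective _ s
      simp only [h1]
      have h2 : T.sup (fun b => b (g s)) = (T.sup id) (g s) := by
        rw [Finset.sup_apply]
        rfl
      rw [h2, ← hsup, hmatch s]
    · push_neg at h
      have h1 : ∀ b, Ψ b i = 0 := fun b => extVec_ne h
      simp only [h1]
      have h2 : τ i = 0 := by
        by_contra ht
        obtain ⟨s, hs⟩ := hcov' i ht
        exact h s hs
      rw [h2]
      exact (Finset.sup_const hne 0).symm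

lemma mu_invariant (α : List ℕ) (n : ℕ) (F : Finset (Fin n → ℕ))
    (hF : (↑F : Set (Fin n → ℕ)) = Pset α n) (μ : (Fin n → ℕ) → ℤ)
    (hμ : ∀ p ∈ F, ∑ q ∈ F.filter (fun q => q ≤ p), μ q = 1) (N : ℕ) :
    ∀ σ τ, σ ∈ F → τ ∈ F → posList (List.ofFn σ) = posList (List.ofFn τ) →
      (∑ i, σ i) < N → μ σ = μ τ := by
  induction N with
  | zero => exact fun σ τ _ _ _ h => absurd h (Nat.not_lt_zero _)
  | succ N ih =>
    intro σ τ hσF hτF hpl hsum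
    have hmemF : ∀ x : Fin n → ℕ, x ∈ F ↔ x ∈ Pset α n := by
      intro x
      rw [← hF]
      rfl
    obtain ⟨m, g, g', hg, hg', hcov, hcov', hmatch⟩ := exists_match hpl
    obtain ⟨hΨσ, hΨle, hΨpl, hΨinv⟩ := psi_facts g g' hg hg' σ τ hcov hcov' hmatch
    obtain ⟨hΨ'τ, hΨ'le, hΨ'pl, hΨ'inv⟩ :=
      psi_facts g' g hg' hg τ σ hcov' hcov (fun s => (hmatch s).symm)
    set Ψ : (Fin n → ℕ) → (Fin n → ℕ) := fun b => extVec g' (fun s => b (g s)) with hΨdef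
    set Ψ' : (Fin n → ℕ) → (Fin n → ℕ) := fun b => extVec g (fun s => b (g' s)) with hΨ'def
    have h1 := hμ σ hσF
    have h2 := hμ τ hτF
    have hσmem : σ ∈ F.filter (fun q => q ≤ σ) := Finset.mem_filter.2 ⟨hσF, le_refl σ⟩
    have hτmem : τ ∈ F.filter (fun q => q ≤ τ) := Finset.mem_filter.2 ⟨hτF, le_refl τ⟩
    rw [← Finset.add_sum_erase _ μ hσmem] at h1
    rw [← Finset.add_sum_erase _ μ hτmem] at h2
    have hkey : ∑ q ∈ (F.filter (fun q => q ≤ σ)).erase σ, μ q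
        = ∑ q ∈ (F.filter (fun q => q ≤ τ)).erase τ, μ q := by
      refine Finset.sum_nbij' Ψ Ψ' ?_ ?_ ?_ ?_ ?_
      · intro q hq
        rw [Finset.mem_erase, Finset.mem_filter] at hq
        obtain ⟨hqne, hqF, hqle⟩ := hq
        rw [Finset.mem_erase, Finset.mem_filter]
        refine ⟨?_, ?_, hΨle q hqle⟩
        · intro heq
          apply hqne
          have heq' : extVec g' (fun t => q (g t)) = τ := heq
          calc q = extVec g (fun s => extVec g' (fun t => q (g t)) (g' s)) := (hΨinv q hqle).symm
            _ = extVec g (fun s => τ (g' s)) := by rw [heq']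
            _ = σ := hΨ'τ
        · rw [hmemF]
          exact transfer_mem (hΨpl q hqle).symm ((hmemF q).1 hqF)
      · intro q hq
        rw [Finset.mem_erase, Finset.mem_filter] at hq
        obtain ⟨hqne, hqF, hqle⟩ := hq
        rw [Finset.mem_erase, Finset.mem_filter]
        refine ⟨?_, ?_, hΨ'le q hqle⟩
        · intro heq
          apply hqne
          have heq' : extVec g (fun t => q (g' t)) = σ := heq
          calc q = extVec g' (fun s => extVec g (fun t => q (g' t)) (g s)) := (hΨ'inv q hqle).symm
            _ = extVec g' (fun s => σ (g s)) := by rw [heq']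
            _ = τ := hΨσ
        · rw [hmemF]
          exact transfer_mem (hΨ'pl q hqle).symm ((hmemF q).1 hqF)
      · intro q hq
        rw [Finset.mem_erase, Finset.mem_filter] at hq
        exact hΨinv q hq.2.2
      · intro q hq
        rw [Finset.mem_erase, Finset.mem_filter] at hq
        exact hΨ'inv q hq.2.2
      · intro q hq
        rw [Finset.mem_erase, Finset.mem_filter] at hq
        obtain ⟨hqne, hqF, hqle⟩ := hq
        have hΨqF : Ψ q ∈ F := by
          rw [hmemF]
          exact transfer_mem (hΨpl q hqle).symm ((hmemF q).1 hqF)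
        have hlt : (∑ i, q i) < ∑ i, σ i := by
          have hne' : ∃ i, q i ≠ σ i := by
            by_contra hc
            push_neg at hc
            exact hqne (funext hc)
          obtain ⟨i0, hi0⟩ := hne'
          exact Finset.sum_lt_sum (fun i _ => hqle i)
            ⟨i0, Finset.mem_univ i0, lt_of_le_of_ne (hqle i0) hi0⟩
        exact ih q (Ψ q) hqF hΨqF (hΨpl q hqle).symm (by omega)
    omega

/-- The polynomial `M̄_α` is quasisymmetric. -/
theorem stmt_9 (α : List ℕ) (hα : ∀ a ∈ α, 0 < a) (n : ℕ) (hn : α.length ≤ n)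
    (F : Finset (Fin n → ℕ)) (hF : (↑F : Set (Fin n → ℕ)) = Pset α n)
    (μ : (Fin n → ℕ) → ℤ)
    (hμ : ∀ p ∈ F, ∑ q ∈ F.filter (fun q => q ≤ p), μ q = 1) :
    IsQuasisymmetric (∑ σ ∈ F, μ σ • ∏ i : Fin n, (X i : MvPolynomial (Fin n) ℤ) ^ σ i) := by
  intro k β hβ j j' hjm hj'm
  have hmemF : ∀ x : Fin n → ℕ, x ∈ F ↔ x ∈ Pset α n := by
    intro x
    rw [← hF]
    rfl
  have hP : ∀ σ : Fin n → ℕ, (∏ i : Fin n, (X i : MvPolynomial (Fin n) ℤ) ^ σ i)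
      = monomial (Finsupp.equivFunOnFinite.symm σ) 1 := by
    intro σ
    rw [← prod_X_pow_eq_monomial]
    have hv : ∀ x : Fin n, (Finsupp.equivFunOnFinite.symm σ) x = σ x := fun _ => rfl
    refine (Finset.prod_subset (Finset.subset_univ _) ?_).symm.trans
      (Finset.prod_congr rfl fun x _ => by rw [hv])
    intro i _ hi
    have h0 : σ i = 0 := by
      rw [← hv i]
      exact Finsupp.notMem_support_iff.1 hi
    rw [h0, pow_zero]
  have hcoeff : ∀ J : Fin k → Fin n,
      coeff (expVec J β) (∑ σ ∈ F, μ σ • ∏ i : Fin n, (X i : MvPolynomial (Fin n) ℤ) ^ σ i)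
        = if extVec J β ∈ F then μ (extVec J β) else 0 := by
    intro J
    rw [coeff_sum]
    have hterm : ∀ σ ∈ F,
        coeff (expVec J β) (μ σ • ∏ i : Fin n, (X i : MvPolynomial (Fin n) ℤ) ^ σ i)
          = if σ = extVec J β then μ σ else 0 := by
      intro σ _
      rw [coeff_smul, hP σ, coeff_monomial]
      have hre : (Finsupp.equivFunOnFinite.symm (extVec J β) : Fin n →₀ ℕ) = expVec J β := rfl
      by_cases hcase : σ = extVec J β
      · rw [if_pos, if_pos hcase]
        · simp
        · rw [hcase, hre]
      · rw [if_neg, if_neg hcase]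
        · simp
        · intro hh
          exact hcase (Finsupp.equivFunOnFinite.symm.injective (hh.trans hre.symm))
    rw [Finset.sum_congr rfl hterm, Finset.sum_ite_eq' F (extVec J β) μ]
  rw [hcoeff j, hcoeff j']
  have hpl : posList (List.ofFn (extVec j β)) = posList (List.ofFn (extVec j' β)) := by
    rw [posList_extVec hjm, posList_extVec hj'm]
  by_cases hc : extVec j β ∈ F
  · have hc' : extVec j' β ∈ F := (hmemF _).2 (transfer_mem hpl ((hmemF _).1 hc))
    rw [if_pos hc, if_pos hc']
    exact mu_invariant α n F hF μ hμ ((∑ i, extVec j β i) + 1) _ _ hc hc' hpl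
      (Nat.lt_succ_self _)
  · have hc' : extVec j' β ∉ F := fun h =>
      hc ((hmemF _).2 (transfer_mem hpl.symm ((hmemF _).1 h)))
    rw [if_neg hc, if_neg hc']
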